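/- Consider the set $D$ of weakly decreasing probability density functions on $[a,b]$ (nonnegative, weakly decreasing, integrating to 1). Every step function of the form $f_c(x) = \frac{1}{c}\mathbf{1}(a \le x \le a + c)$ for $0 < c \le b-a$ is an extreme point of $D$: if $f_c = \alpha g + (1-\alpha) h$ with $g, h \in D$ and $\alpha \in (0,1)$, then $g = f_c = h$ almost everywhere. -/

import Mathlib

open MeasureTheory Set

lemma step_density_aux
    (a b c : ℝ) (hc : 0 < c) (hcb : c ≤ b - a)
    (g h : ℝ → ℝ) (α : ℝ) (hα0 : 0 < α) (hα1 : α < 1)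
    (hg0 : ∀ x ∈ Set.Icc a b, 0 ≤ g x) (hgmono : AntitoneOn g (Set.Icc a b))
    (hgint : (∫ x in Set.Icc a b, g x) = 1)
    (hh0 : ∀ x ∈ Set.Icc a b, 0 ≤ h x) (hhmono : AntitoneOn h (Set.Icc a b))
    (heq : ∀ x ∈ Set.Icc a b,
      Set.indicator (Set.Icc a (a + c)) (fun _ => 1 / c) x = α * g x + (1 - α) * h x) :
    ∀ x ∈ Set.Icc a b, g x = Set.indicator (Set.Icc a (a + c)) (fun _ => 1 / c) x := by
  have hab : a + c ≤ b := by linarith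
  have hsub : Set.Icc a (a+c) ⊆ Set.Icc a b := Set.Icc_subset_Icc le_rfl hab
  have hmemA : a ∈ Set.Icc a b := ⟨le_rfl, by linarith⟩
  have hconst : ∀ x ∈ Set.Icc a (a+c), g x = g a := by
    intro x hx
    have hx' := hsub hx
    have h1 : α * g a + (1-α) * h a = 1/c := by
      have := heq a hmemA
      rw [Set.indicator_of_mem (Set.mem_Icc.mpr ⟨le_rfl, by linarith⟩)] at this
      linarith
    have h2 : α * g x + (1-α) * h x = 1/c := by
      have := heq x hx'
      rw [Set.indicator_of_mem hx] at this
      linarith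
    have hga : g x ≤ g a := hgmono hmemA hx' hx.1
    have hha : h x ≤ h a := hhmono hmemA hx' hx.1
    nlinarith [mul_nonneg hα0.le (sub_nonneg.mpr hga),
      mul_nonneg (by linarith : (0:ℝ) ≤ 1-α) (sub_nonneg.mpr hha)]
  have hzero : ∀ x ∈ Set.Icc a b, x ∉ Set.Icc a (a+c) → g x = 0 := by
    intro x hx hxn
    have heqx := heq x hx
    rw [Set.indicator_of_notMem hxn] at heqx
    have h1 : 0 ≤ α * g x := mul_nonneg hα0.le (hg0 x hx)
    have h2 : 0 ≤ (1-α) * h x := mul_nonneg (by linarith) (hh0 x hx)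
    have h3 : α * g x = 0 := by linarith
    rcases mul_eq_zero.mp h3 with h' | h'
    · exact absurd h' (ne_of_gt hα0)
    · exact h'
  have hpt : ∀ x ∈ Set.Icc a b, g x = Set.indicator (Set.Icc a (a+c)) (fun _ => g a) x := by
    intro x hx
    by_cases hxm : x ∈ Set.Icc a (a+c)
    · rw [Set.indicator_of_mem hxm]; exact hconst x hxm
    · rw [Set.indicator_of_notMem hxm]; exact hzero x hx hxm
  have hint : (∫ x in Set.Icc a b, g x) = c * g a := by
    rw [setIntegral_congr_fun measurableSet_Icc hpt,
      setIntegral_indicator measurableSet_Icc,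
      Set.inter_eq_right.mpr hsub, setIntegral_const, measureReal_def, Real.volume_Icc,
      ENNReal.toReal_ofReal (by linarith), smul_eq_mul]
    ring
  have hga : g a = 1/c := by
    have hcg : c * g a = 1 := by rw [← hint]; exact hgint
    rw [eq_div_iff hc.ne']
    linear_combination hcg
  intro x hx
  rw [hpt x hx, hga]

/-- Each step density `f_c = (1/c)·1_{[a, a+c]}` with `0 < c ≤ b - a`
is an extreme point of the convex set of weakly decreasing probability densities on
`[a, b]`: any representation as a nontrivial convex combination of two such densities
forces both to equal `f_c` almost everywhere on `[a,b]`. -/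
theorem step_density_extreme_point
    (a b c : ℝ) (hc : 0 < c) (hcb : c ≤ b - a)
    (g h : ℝ → ℝ) (α : ℝ) (hα : α ∈ Set.Ioo (0 : ℝ) 1)
    (hg0 : ∀ x ∈ Set.Icc a b, 0 ≤ g x) (hgmono : AntitoneOn g (Set.Icc a b))
    (hgint : (∫ x in Set.Icc a b, g x) = 1)
    (hh0 : ∀ x ∈ Set.Icc a b, 0 ≤ h x) (hhmono : AntitoneOn h (Set.Icc a b))
    (hhint : (∫ x in Set.Icc a b, h x) = 1)
    (heq : ∀ x ∈ Set.Icc a b,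
      Set.indicator (Set.Icc a (a + c)) (fun _ => 1 / c) x = α * g x + (1 - α) * h x) :
    (∀ᵐ x ∂(volume.restrict (Set.Icc a b)),
        g x = Set.indicator (Set.Icc a (a + c)) (fun _ => 1 / c) x) ∧
    (∀ᵐ x ∂(volume.restrict (Set.Icc a b)),
        h x = Set.indicator (Set.Icc a (a + c)) (fun _ => 1 / c) x) := by
  obtain ⟨hα0, hα1⟩ := hα
  have heq' : ∀ x ∈ Set.Icc a b,
      Set.indicator (Set.Icc a (a + c)) (fun _ => 1 / c) x
        = (1-α) * h x + (1 - (1-α)) * g x := by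
    intro x hx
    rw [heq x hx]; ring
  have Hg := step_density_aux a b c hc hcb g h α hα0 hα1 hg0 hgmono hgint hh0 hhmono heq
  have Hh := step_density_aux a b c hc hcb h g (1-α) (by linarith) (by linarith)
    hh0 hhmono hhint hg0 hgmono heq'
  exact ⟨ae_restrict_of_forall_mem measurableSet_Icc Hg,
    ae_restrict_of_forall_mem measurableSet_Icc Hh⟩
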